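/- (Theorem 1, combined) Let N L : ℕ with L ≤ N, f ∈ ℂ, g : Fin N → ℂ, and η : ℝ with 1 ≤ η. Let σ be a permutation of Fin N with i ↦ ‖g (σ i)‖ antitone and set A⋆ = σ '' {i : Fin N | (i : ℕ) < L}. Then for every finite subset A of Fin N with A.card = L and every ω : Fin N → ℂ with ‖ω i‖ ≤ η for i ∈ A and ‖ω i‖ = 1 for i ∉ A, one has ‖f + ∑_{i : Fin N} ω i * g i‖ ≤ ‖f‖ + η * ∑_{i ∈ A⋆} ‖g i‖ + ∑_{i ∉ A⋆} ‖g i‖, and this upper bound is attained by the placement A⋆ together with the coefficients ω⋆ i = η * exp(-I * (arg (g i) - arg f)) for i ∈ A⋆ and ω⋆ i = exp(-I * (arg (g i) - arg f)) for i ∉ A⋆. -/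

import Mathlib

open Complex

lemma aux_le_strictMono {L : ℕ} (φ : Fin L → ℕ) (hφ : StrictMono φ) :
    ∀ j : Fin L, (j : ℕ) ≤ φ j := by
  suffices h : ∀ n, ∀ j : Fin L, (j : ℕ) = n → n ≤ φ j by
    intro j; exact h _ j rfl
  intro n
  induction n with
  | zero => intro j _; exact Nat.zero_le _
  | succ k ih =>
    intro j hj
    have hk : k < L := by omega
    have hlt : (⟨k, hk⟩ : Fin L) < j := by
      simp [Fin.lt_def, hj]
    have := hφ hlt
    have := ih ⟨k, hk⟩ rfl
    omega

lemma aux_sum_le_first {N L : ℕ} (hLN : L ≤ N) (h : Fin N → ℝ) (hh : Antitone h)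
    (S : Finset (Fin N)) (hS : S.card = L) :
    ∑ i ∈ S, h i ≤ ∑ i ∈ Finset.univ.filter (fun i : Fin N => (i : ℕ) < L), h i := by
  have himg : S = Finset.image (fun j => (S.orderEmbOfFin hS j : Fin N)) Finset.univ := by
    symm
    apply Finset.eq_of_subset_of_card_le
    · intro x hx
      simp only [Finset.mem_image] at hx
      obtain ⟨j, _, rfl⟩ := hx
      exact S.orderEmbOfFin_mem hS j
    · rw [hS, Finset.card_image_of_injective _ (S.orderEmbOfFin hS).injective,
        Finset.card_univ, Fintype.card_fin]
  have hfil : Finset.univ.filter (fun i : Fin N => (i : ℕ) < L)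
      = Finset.image (fun j : Fin L => Fin.castLE hLN j) Finset.univ := by
    ext x
    simp only [Finset.mem_filter, Finset.mem_univ, true_and, Finset.mem_image]
    constructor
    · intro hx; exact ⟨⟨(x : ℕ), hx⟩, Fin.ext rfl⟩
    · rintro ⟨j, rfl⟩; exact j.2
  rw [himg, hfil,
    Finset.sum_image (fun x _ y _ hxy => (S.orderEmbOfFin hS).injective hxy),
    Finset.sum_image (fun x _ y _ hxy => Fin.castLE_injective hLN hxy)]
  apply Finset.sum_le_sum
  intro j _
  apply hh
  have : (j : ℕ) ≤ ((S.orderEmbOfFin hS j : Fin N) : ℕ) :=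
    aux_le_strictMono (fun j => ((S.orderEmbOfFin hS j : Fin N) : ℕ))
      (fun a b hab => by exact_mod_cast (Fin.lt_def.mp ((S.orderEmbOfFin hS).strictMono hab))) j
  exact Fin.le_def.mpr this

lemma aux_phase_align2 (η r a b : ℝ) :
    ((η : ℂ) * Complex.exp (-I * ((a : ℂ) - (b : ℂ)))) * (((r : ℝ) : ℂ) * Complex.exp ((a : ℂ) * I))
      = ((η * r : ℝ) : ℂ) * Complex.exp ((b : ℂ) * I) := by
  have he : Complex.exp (-I * ((a : ℂ) - (b : ℂ))) * Complex.exp ((a : ℂ) * I)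
      = Complex.exp ((b : ℂ) * I) := by
    rw [← Complex.exp_add]; congr 1; ring
  calc ((η : ℂ) * Complex.exp (-I * ((a : ℂ) - (b : ℂ)))) * (((r : ℝ) : ℂ) * Complex.exp ((a : ℂ) * I))
      = (η : ℂ) * (r : ℂ) * (Complex.exp (-I * ((a : ℂ) - (b : ℂ))) * Complex.exp ((a : ℂ) * I)) := by
        ring
    _ = (η : ℂ) * (r : ℂ) * Complex.exp ((b : ℂ) * I) := by rw [he]
    _ = ((η * r : ℝ) : ℂ) * Complex.exp ((b : ℂ) * I) := by push_cast; ring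

lemma aux_phase_align (η : ℝ) (z : ℂ) (b : ℝ) :
    ((η : ℂ) * Complex.exp (-I * ((Complex.arg z : ℂ) - (b : ℂ)))) * z
      = ((η * ‖z‖ : ℝ) : ℂ) * Complex.exp ((b : ℂ) * I) := by
  have hz : ((‖z‖ : ℝ) : ℂ) * Complex.exp ((Complex.arg z : ℂ) * I) = z := by
    exact_mod_cast Complex.norm_mul_exp_arg_mul_I z
  calc ((η : ℂ) * Complex.exp (-I * ((Complex.arg z : ℂ) - (b : ℂ)))) * z
      = ((η : ℂ) * Complex.exp (-I * ((Complex.arg z : ℂ) - (b : ℂ))))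
          * (((‖z‖ : ℝ) : ℂ) * Complex.exp ((Complex.arg z : ℂ) * I)) := by rw [hz]
    _ = ((η * ‖z‖ : ℝ) : ℂ) * Complex.exp ((b : ℂ) * I) := aux_phase_align2 η ‖z‖ _ b

theorem hris_optimal_placement_and_coefficients (N L : ℕ) (hLN : L ≤ N)
    (f : ℂ) (g : Fin N → ℂ) (η : ℝ) (hη : 1 ≤ η)
    (σ : Equiv.Perm (Fin N)) (hσ : Antitone (fun i => ‖g (σ i)‖))
    (Astar : Finset (Fin N))
    (hAstar : Astar = Finset.image σ (Finset.univ.filter (fun i : Fin N => (i : ℕ) < L)))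
    (ωstar : Fin N → ℂ)
    (hωstarA : ∀ i ∈ Astar,
      ωstar i = (η : ℂ) * Complex.exp (-I * ((Complex.arg (g i) : ℂ) - (Complex.arg f : ℂ))))
    (hωstarAc : ∀ i ∉ Astar,
      ωstar i = Complex.exp (-I * ((Complex.arg (g i) : ℂ) - (Complex.arg f : ℂ)))) :
    (∀ (A : Finset (Fin N)), A.card = L → ∀ (ω : Fin N → ℂ),
      (∀ i ∈ A, ‖ω i‖ ≤ η) → (∀ i ∉ A, ‖ω i‖ = 1) →
      ‖f + ∑ i : Fin N, ω i * g i‖ ≤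
        ‖f‖ + η * ∑ i ∈ Astar, ‖g i‖ + ∑ i ∈ Astarᶜ, ‖g i‖) ∧
    ‖f + ∑ i : Fin N, ωstar i * g i‖ =
      ‖f‖ + η * ∑ i ∈ Astar, ‖g i‖ + ∑ i ∈ Astarᶜ, ‖g i‖ := by
  have hbest : ∀ A : Finset (Fin N), A.card = L →
      ∑ i ∈ A, ‖g i‖ ≤ ∑ i ∈ Astar, ‖g i‖ := by
    intro A hA
    have hAstarSum : ∑ i ∈ Astar, ‖g i‖
        = ∑ i ∈ Finset.univ.filter (fun i : Fin N => (i : ℕ) < L), ‖g (σ i)‖ := by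
      rw [hAstar, Finset.sum_image (fun x _ y _ hxy => σ.injective hxy)]
    have hASum : ∑ i ∈ A, ‖g i‖ = ∑ i ∈ A.image σ.symm, ‖g (σ i)‖ := by
      rw [Finset.sum_image (fun x _ y _ hxy => σ.symm.injective hxy)]
      simp
    rw [hASum, hAstarSum]
    exact aux_sum_le_first hLN _ hσ _ (by
      rw [Finset.card_image_of_injective _ σ.symm.injective, hA])
  have hC : ∀ A : Finset (Fin N), A.card = L →
      η * ∑ i ∈ A, ‖g i‖ + ∑ i ∈ Aᶜ, ‖g i‖ ≤
      η * ∑ i ∈ Astar, ‖g i‖ + ∑ i ∈ Astarᶜ, ‖g i‖ := by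
    intro A hA
    have h1 : ∑ i ∈ A, ‖g i‖ + ∑ i ∈ Aᶜ, ‖g i‖ = ∑ i : Fin N, ‖g i‖ :=
      Finset.sum_add_sum_compl A _
    have h2 : ∑ i ∈ Astar, ‖g i‖ + ∑ i ∈ Astarᶜ, ‖g i‖ = ∑ i : Fin N, ‖g i‖ :=
      Finset.sum_add_sum_compl Astar _
    have h3 := hbest A hA
    nlinarith [h3, hη]
  refine ⟨?_, ?_⟩
  · intro A hA ω hωA hωAc
    calc ‖f + ∑ i : Fin N, ω i * g i‖
        ≤ ‖f‖ + ‖∑ i : Fin N, ω i * g i‖ := norm_add_le _ _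
      _ ≤ ‖f‖ + ∑ i : Fin N, ‖ω i * g i‖ := by
          gcongr; exact norm_sum_le _ _
      _ ≤ ‖f‖ + (η * ∑ i ∈ A, ‖g i‖ + ∑ i ∈ Aᶜ, ‖g i‖) := by
          gcongr ‖f‖ + ?_
          rw [← Finset.sum_add_sum_compl A fun i => ‖ω i * g i‖, Finset.mul_sum]
          gcongr with i hi i hi
          · rw [norm_mul]
            exact mul_le_mul_of_nonneg_right (hωA i hi) (norm_nonneg _)
          · rw [norm_mul, hωAc i (Finset.mem_compl.mp hi), one_mul]
      _ ≤ ‖f‖ + (η * ∑ i ∈ Astar, ‖g i‖ + ∑ i ∈ Astarᶜ, ‖g i‖) := by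
          gcongr ‖f‖ + ?_; exact hC A hA
      _ = ‖f‖ + η * ∑ i ∈ Astar, ‖g i‖ + ∑ i ∈ Astarᶜ, ‖g i‖ := by ring
  · -- attainment
    have key : ∀ i : Fin N, ωstar i * g i =
        (((if i ∈ Astar then η else 1) * ‖g i‖ : ℝ) : ℂ)
          * Complex.exp ((Complex.arg f : ℂ) * I) := by
      intro i
      by_cases hi : i ∈ Astar
      · rw [if_pos hi, hωstarA i hi]
        exact aux_phase_align η (g i) (Complex.arg f)
      · rw [if_neg hi, hωstarAc i hi]
        have := aux_phase_align 1 (g i) (Complex.arg f)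
        rw [Complex.ofReal_one, one_mul] at this
        exact this
    have hreal : ∑ i : Fin N, (if i ∈ Astar then η else 1) * ‖g i‖
        = η * ∑ i ∈ Astar, ‖g i‖ + ∑ i ∈ Astarᶜ, ‖g i‖ := by
      rw [← Finset.sum_add_sum_compl Astar (fun i => (if i ∈ Astar then η else 1) * ‖g i‖)]
      congr 1
      · rw [Finset.mul_sum]
        exact Finset.sum_congr rfl fun i hi => by rw [if_pos hi]
      · exact Finset.sum_congr rfl fun i hi => by
          rw [if_neg (Finset.mem_compl.mp hi), one_mul]
    have hsum : ∑ i : Fin N, ωstar i * g i =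
        (((η * ∑ i ∈ Astar, ‖g i‖ + ∑ i ∈ Astarᶜ, ‖g i‖ : ℝ)) : ℂ)
          * Complex.exp ((Complex.arg f : ℂ) * I) := by
      simp_rw [key]
      rw [← Finset.sum_mul]
      congr 1
      rw [← hreal]
      norm_cast
    have hCge : (0:ℝ) ≤ η * ∑ i ∈ Astar, ‖g i‖ + ∑ i ∈ Astarᶜ, ‖g i‖ := by
      have h1 : (0:ℝ) ≤ ∑ i ∈ Astar, ‖g i‖ := Finset.sum_nonneg fun i _ => norm_nonneg _
      have h2 : (0:ℝ) ≤ ∑ i ∈ Astarᶜ, ‖g i‖ := Finset.sum_nonneg fun i _ => norm_nonneg _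
      nlinarith
    rw [hsum]
    set C := η * ∑ i ∈ Astar, ‖g i‖ + ∑ i ∈ Astarᶜ, ‖g i‖ with hCdef
    have hf : ((‖f‖ : ℝ) : ℂ) * Complex.exp ((Complex.arg f : ℂ) * I) = f := by
      exact_mod_cast Complex.norm_mul_exp_arg_mul_I f
    have hstep : f + ((C : ℝ) : ℂ) * Complex.exp ((Complex.arg f : ℂ) * I)
        = (((‖f‖ + C : ℝ)) : ℂ) * Complex.exp ((Complex.arg f : ℂ) * I) := by
      push_cast
      linear_combination -hf
    have he1 : ‖Complex.exp ((Complex.arg f : ℂ) * I)‖ = 1 := by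
      exact Complex.norm_exp_ofReal_mul_I _
    rw [hstep, norm_mul, he1, mul_one, Complex.norm_real, Real.norm_eq_abs,
      _root_.abs_of_nonneg (by have := norm_nonneg f; linarith : (0:ℝ) ≤ ‖f‖ + C), hCdef]
    ring
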